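/- If U and U' are nearly coherent nonprincipal ultrafilters on ℕ, then the ultrapowers have the same cofinality: cf(U-prod ω) = cf(U'-prod ω). -/
import Mathlib


open Cardinal Set Filter

/-- A nonprincipal ultrafilter on ℕ: one that is not of the form `pure n`. -/
def Nonprincipal (U : Ultrafilter ℕ) : Prop := ∀ n : ℕ, U ≠ pure n

/-- `C` is cofinal in the ultrapower `U-prod ω` with respect to `≤_U`. -/
def UCofinal (U : Ultrafilter ℕ) (C : Set (ℕ → ℕ)) : Prop :=
  ∀ f : ℕ → ℕ, ∃ g ∈ C, {n : ℕ | f n ≤ g n} ∈ U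

/-- The cofinality of the ultrapower `U-prod ω`: the least cardinality of a
set of functions cofinal with respect to `≤_U`. -/
noncomputable def cfUProd (U : Ultrafilter ℕ) : Cardinal :=
  sInf {c : Cardinal | ∃ C : Set (ℕ → ℕ), UCofinal U C ∧ c = #C}

/-- The bounding number 𝔟. -/
noncomputable def boundingNumber : Cardinal :=
  sInf {c : Cardinal | ∃ B : Set (ℕ → ℕ),
    (∀ f : ℕ → ℕ, ∃ g ∈ B, {n : ℕ | f n ≤ g n}.Infinite) ∧ c = #B}

/-- The dominating number 𝔡. -/
noncomputable def dominatingNumber : Cardinal :=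
  sInf {c : Cardinal | ∃ D : Set (ℕ → ℕ),
    (∀ f : ℕ → ℕ, ∃ g ∈ D, {n : ℕ | ¬ f n ≤ g n}.Finite) ∧ c = #D}

/-- The splitting number 𝔰. -/
noncomputable def splittingNumber : Cardinal :=
  sInf {c : Cardinal | ∃ S : Set (Set ℕ),
    (∀ X : Set ℕ, X.Infinite → ∃ Y ∈ S, (X ∩ Y).Infinite ∧ (X \ Y).Infinite) ∧ c = #S}

/-- A family of infinite subsets of ℕ is groupwise dense if it is closed under
infinite subsets and finite modifications and, for every partition of ℕ into
consecutive finite intervals (given by a strictly increasing sequence starting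
at 0), the union of some infinitely many of the intervals is in the family. -/
def GroupwiseDense (G : Set (Set ℕ)) : Prop :=
  (∀ X ∈ G, X.Infinite) ∧
  (∀ X ∈ G, ∀ Y : Set ℕ, Y ⊆ X → Y.Infinite → Y ∈ G) ∧
  (∀ X ∈ G, ∀ Y : Set ℕ, (symmDiff X Y).Finite → Y ∈ G) ∧
  (∀ a : ℕ → ℕ, a 0 = 0 → StrictMono a →
    ∃ K : Set ℕ, K.Infinite ∧ (⋃ k ∈ K, Set.Ico (a k) (a (k + 1))) ∈ G)

/-- The groupwise density number 𝔤. -/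
noncomputable def groupwiseDensityNumber : Cardinal :=
  sInf {c : Cardinal | ∃ 𝒢 : Set (Set (Set ℕ)),
    (∀ G ∈ 𝒢, GroupwiseDense G) ∧ ⋂₀ 𝒢 = ∅ ∧ c = #𝒢}

/-- `U` is a pseudo-P_κ point. -/
def PseudoPPoint (U : Ultrafilter ℕ) (κ : Cardinal) : Prop :=
  ∀ F : Set (Set ℕ), (∀ A ∈ F, A ∈ U) → #F < κ →
    ∃ A : Set ℕ, A.Infinite ∧ ∀ B ∈ F, (A \ B).Finite

/-- A finite-to-one function on ℕ. -/
def FinToOne (f : ℕ → ℕ) : Prop := ∀ n : ℕ, (f ⁻¹' {n}).Finite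

/-- Two ultrafilters are nearly coherent if they have a common image under
finite-to-one maps. -/
def NearlyCoherent (U U' : Ultrafilter ℕ) : Prop :=
  ∃ f f' : ℕ → ℕ, FinToOne f ∧ FinToOne f' ∧
    Ultrafilter.map f U = Ultrafilter.map f' U'

/-- `nuX X n` is the least element of `X` greater than `n`. -/
noncomputable def nuX (X : Set ℕ) (n : ℕ) : ℕ := sInf {m : ℕ | m ∈ X ∧ n < m}

lemma cfUProd_le_of_transfer (U V : Ultrafilter ℕ)
    (h : ∀ C : Set (ℕ → ℕ), UCofinal V C → ∃ C' : Set (ℕ → ℕ), UCofinal U C' ∧ #C' ≤ #C) :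
    cfUProd U ≤ cfUProd V := by
  have hne : {c : Cardinal | ∃ C, UCofinal V C ∧ c = #C}.Nonempty :=
    ⟨#(Set.univ : Set (ℕ → ℕ)), Set.univ, fun g => ⟨g, trivial, by simp only [le_refl]; exact Filter.univ_mem⟩, rfl⟩
  obtain ⟨C, hC, hc⟩ := csInf_mem hne
  obtain ⟨C', hC', hle⟩ := h C hC
  calc cfUProd U ≤ #C' := csInf_le' ⟨C', hC', rfl⟩
    _ ≤ #C := hle
    _ = cfUProd V := hc.symm

lemma cfUProd_map (U : Ultrafilter ℕ) (f : ℕ → ℕ) (hf : FinToOne f) :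
    cfUProd (Ultrafilter.map f U) = cfUProd U := by
  apply le_antisymm
  · apply cfUProd_le_of_transfer
    intro C hC
    refine ⟨(fun g n => sSup (g '' (f ⁻¹' {n}))) '' C, ?_, Cardinal.mk_image_le⟩
    intro h
    obtain ⟨g, hg, hmem⟩ := hC (h ∘ f)
    refine ⟨_, ⟨g, hg, rfl⟩, ?_⟩
    rw [Ultrafilter.mem_map]
    apply Filter.mem_of_superset hmem
    intro m hm
    exact le_trans hm (le_csSup ((hf (f m)).image g).bddAbove ⟨m, rfl, rfl⟩)
  · apply cfUProd_le_of_transfer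
    intro C hC
    refine ⟨(fun g => g ∘ f) '' C, ?_, Cardinal.mk_image_le⟩
    intro h
    obtain ⟨g, hg, hmem⟩ := hC (fun n => sSup (h '' (f ⁻¹' {n})))
    refine ⟨g ∘ f, ⟨g, hg, rfl⟩, ?_⟩
    rw [Ultrafilter.mem_map] at hmem
    apply Filter.mem_of_superset hmem
    intro m hm
    exact le_trans (le_csSup ((hf (f m)).image h).bddAbove ⟨m, rfl, rfl⟩) hm

/-- Nearly coherent ultrafilters give ultrapowers of the same cofinality. -/
theorem stmt_11 (U U' : Ultrafilter ℕ) (hU : Nonprincipal U) (hU' : Nonprincipal U')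
    (h : NearlyCoherent U U') :
    cfUProd U = cfUProd U' := by
  obtain ⟨f, f', hf, hf', heq⟩ := h
  calc cfUProd U = cfUProd (Ultrafilter.map f U) := (cfUProd_map U f hf).symm
    _ = cfUProd (Ultrafilter.map f' U') := by rw [heq]
    _ = cfUProd U' := cfUProd_map U' f' hf'
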